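/- Consider horizon T ≥ 1 and the COLDQ setup: 𝒳 ⊆ ℝ^p convex with ‖x − y‖ ≤ R for all x, y ∈ 𝒳 (R > 0); convex loss functions f_t : 𝒳 → ℝ (1 ≤ t ≤ T) admitting subgradient maps ∇f_t : 𝒳 → ℝ^p with ‖∇f_t(x)‖ ≤ D and f_t(y) ≥ f_t(x) + ⟨∇f_t(x), y − x⟩ for all x, y ∈ 𝒳; convex constraint functions g_t^n : 𝒳 → ℝ (1 ≤ n ≤ N) with |g_t^n(x)| ≤ G for all x ∈ 𝒳; a nondecreasing sequence α_t > 0; parameters η ∈ (0,1), γ ∈ (0, G/η). The algorithm picks x_1 ∈ 𝒳 arbitrarily, sets Q_1^n = γ, and for each t ∈ {2,…,T} chooses x_t as a minimizer over 𝒳 of Φ_t(x) = ⟨∇f_{t−1}(x_{t−1}), x − x_{t−1}⟩ + α_{t−1}·‖x − x_{t−1}‖² + Σ_{n=1}^N Q_{t−1}^n·[g_{t−1}^n(x)]_+ , then updates Q_t^n = max{(1−η)·Q_{t−1}^n + [g_t^n(x_t)]_+ , γ}. Let x_t* ∈ 𝒳 satisfy g_t^n(x_t*) ≤ 0 for all t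 and n. Then the dynamic regret satisfies Σ_{t=1}^T [f_t(x_t) − f_t(x_t*)] ≤ 2·R·Σ_{t=2}^T α_{t−1}·‖x_t* − x_{t−1}*‖ + (D²/4)·Σ_{t=1}^T (1/α_t) + R²·α_T + D·R. -/

import Mathlib

open scoped RealInnerProductSpace

private lemma norm_combo {p : ℕ} (a b c : EuclideanSpace ℝ (Fin p)) (l : ℝ) :
    ‖(1 - l) • a + l • b - c‖ ^ 2
      = (1 - l) * ‖a - c‖ ^ 2 + l * ‖b - c‖ ^ 2 - l * (1 - l) * ‖a - b‖ ^ 2 := by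
  have h : (1 - l) • a + l • b - c = (1 - l) • (a - c) + l • (b - c) := by module
  have h2 : a - b = (a - c) - (b - c) := by abel
  have hab : ‖a - b‖ ^ 2 = ‖a - c‖ ^ 2 - 2 * ⟪a - c, b - c⟫ + ‖b - c‖ ^ 2 := by
    rw [h2]; exact norm_sub_sq_real _ _
  rw [h, norm_add_sq_real, real_inner_smul_left,
    real_inner_smul_right, norm_smul, norm_smul, mul_pow, mul_pow,
    Real.norm_eq_abs, Real.norm_eq_abs, sq_abs, sq_abs, hab]
  ring

private lemma three_point {p N : ℕ} {𝒳 : Set (EuclideanSpace ℝ (Fin p))}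
    (hconv : Convex ℝ 𝒳)
    (u x0 : EuclideanSpace ℝ (Fin p)) {a : ℝ} (ha : 0 < a)
    (Qv : Fin N → ℝ) (hQ : ∀ n, 0 ≤ Qv n)
    (gv : Fin N → EuclideanSpace ℝ (Fin p) → ℝ) (hg : ∀ n, ConvexOn ℝ 𝒳 (gv n))
    {xm : EuclideanSpace ℝ (Fin p)} (hxm : xm ∈ 𝒳)
    (hmin : ∀ y ∈ 𝒳,
      ⟪u, xm - x0⟫ + a * ‖xm - x0‖ ^ 2 + ∑ n, Qv n * max (gv n xm) 0 ≤
      ⟪u, y - x0⟫ + a * ‖y - x0‖ ^ 2 + ∑ n, Qv n * max (gv n y) 0)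
    {y : EuclideanSpace ℝ (Fin p)} (hy : y ∈ 𝒳) :
    ⟪u, xm - x0⟫ + a * ‖xm - x0‖ ^ 2 + ∑ n, Qv n * max (gv n xm) 0 + a * ‖y - xm‖ ^ 2 ≤
      ⟪u, y - x0⟫ + a * ‖y - x0‖ ^ 2 + ∑ n, Qv n * max (gv n y) 0 := by
  have hC0 : (0:ℝ) ≤ a * ‖y - xm‖ ^ 2 := by positivity
  refine le_of_forall_pos_le_add fun ε hε => ?_
  set l : ℝ := min (1/2) (ε / (a * ‖y - xm‖ ^ 2 + 1)) with hl
  have hl0 : 0 < l := lt_min (by norm_num) (by positivity)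
  have hl1 : l < 1 := lt_of_le_of_lt (min_le_left _ _) (by norm_num)
  set z : EuclideanSpace ℝ (Fin p) := (1 - l) • xm + l • y with hzdef
  have hzX : z ∈ 𝒳 := hconv hxm hy (by linarith) hl0.le (by ring)
  have hinn : ⟪u, z - x0⟫ = (1 - l) * ⟪u, xm - x0⟫ + l * ⟪u, y - x0⟫ := by
    have hzx : z - x0 = (1 - l) • (xm - x0) + l • (y - x0) := by rw [hzdef]; module
    rw [hzx, inner_add_right, real_inner_smul_right, real_inner_smul_right]
  have hnorm : ‖z - x0‖ ^ 2
      = (1 - l) * ‖xm - x0‖ ^ 2 + l * ‖y - x0‖ ^ 2 - l * (1 - l) * ‖y - xm‖ ^ 2 := by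
    rw [hzdef, norm_combo, norm_sub_rev xm y]
  have hgz : ∀ n, max (gv n z) 0 ≤ (1 - l) * max (gv n xm) 0 + l * max (gv n y) 0 := by
    intro n
    have hc : gv n z ≤ (1 - l) * gv n xm + l * gv n y := by
      rw [hzdef]
      exact (hg n).2 hxm hy (by linarith) hl0.le (by ring)
    have h1 : gv n xm ≤ max (gv n xm) 0 := le_max_left _ _
    have h2 : gv n y ≤ max (gv n y) 0 := le_max_left _ _
    have h3 : (0:ℝ) ≤ max (gv n xm) 0 := le_max_right _ _
    have h4 : (0:ℝ) ≤ max (gv n y) 0 := le_max_right _ _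
    have h5 := mul_le_mul_of_nonneg_left h1 (by linarith : (0:ℝ) ≤ 1 - l)
    have h6 := mul_le_mul_of_nonneg_left h2 hl0.le
    have h7 := mul_nonneg (by linarith : (0:ℝ) ≤ 1 - l) h3
    have h8 := mul_nonneg hl0.le h4
    refine max_le (by linarith) (by linarith)
  have hsumz : ∑ n, Qv n * max (gv n z) 0
      ≤ (1 - l) * (∑ n, Qv n * max (gv n xm) 0) + l * (∑ n, Qv n * max (gv n y) 0) := by
    rw [Finset.mul_sum, Finset.mul_sum, ← Finset.sum_add_distrib]
    refine Finset.sum_le_sum fun n _ => ?_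
    calc Qv n * max (gv n z) 0
        ≤ Qv n * ((1 - l) * max (gv n xm) 0 + l * max (gv n y) 0) :=
          mul_le_mul_of_nonneg_left (hgz n) (hQ n)
      _ = (1 - l) * (Qv n * max (gv n xm) 0) + l * (Qv n * max (gv n y) 0) := by ring
  have h3 := hmin z hzX
  rw [hinn, hnorm] at h3
  have key : ⟪u, xm - x0⟫ + a * ‖xm - x0‖ ^ 2 + ∑ n, Qv n * max (gv n xm) 0
      + (1 - l) * (a * ‖y - xm‖ ^ 2)
      ≤ ⟪u, y - x0⟫ + a * ‖y - x0‖ ^ 2 + ∑ n, Qv n * max (gv n y) 0 := by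
    nlinarith [h3, hsumz, hl0, hC0]
  have h5 : l * (a * ‖y - xm‖ ^ 2) ≤ ε := by
    have h6 : l ≤ ε / (a * ‖y - xm‖ ^ 2 + 1) := min_le_right _ _
    have h7 : l * (a * ‖y - xm‖ ^ 2) ≤ ε / (a * ‖y - xm‖ ^ 2 + 1) * (a * ‖y - xm‖ ^ 2) :=
      mul_le_mul_of_nonneg_right h6 hC0
    have h8 : ε / (a * ‖y - xm‖ ^ 2 + 1) * (a * ‖y - xm‖ ^ 2) ≤ ε := by
      rw [div_mul_eq_mul_div, div_le_iff₀ (by positivity)]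
      nlinarith
    linarith
  linarith [key, h5]

set_option maxHeartbeats 1600000 in
/-- Dynamic regret bound of COLDQ (Theorem 1). -/
theorem coldq_dynamic_regret
    (p N T : ℕ) (hT : 1 ≤ T) (R D G η γ : ℝ)
    (hR : 0 < R)
    (𝒳 : Set (EuclideanSpace ℝ (Fin p)))
    (hXconv : Convex ℝ 𝒳)
    (hXbdd : ∀ x ∈ 𝒳, ∀ y ∈ 𝒳, ‖x - y‖ ≤ R)
    (f : ℕ → EuclideanSpace ℝ (Fin p) → ℝ)
    (hfconv : ∀ t, ConvexOn ℝ 𝒳 (f t))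
    (gradf : ℕ → EuclideanSpace ℝ (Fin p) → EuclideanSpace ℝ (Fin p))
    (hgradD : ∀ t, ∀ x ∈ 𝒳, ‖gradf t x‖ ≤ D)
    (hsub : ∀ t, ∀ x ∈ 𝒳, ∀ y ∈ 𝒳, f t x + ⟪gradf t x, y - x⟫ ≤ f t y)
    (g : ℕ → Fin N → EuclideanSpace ℝ (Fin p) → ℝ)
    (hgconv : ∀ t n, ConvexOn ℝ 𝒳 (g t n))
    (hgG : ∀ t n, ∀ x ∈ 𝒳, |g t n x| ≤ G)
    (α : ℕ → ℝ) (hαpos : ∀ t, 0 < α t) (hαmono : Monotone α)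
    (hη0 : 0 < η) (hη1 : η < 1) (hγ0 : 0 < γ) (hγG : γ < G / η)
    (x : ℕ → EuclideanSpace ℝ (Fin p)) (hx1 : x 1 ∈ 𝒳)
    (Q : ℕ → Fin N → ℝ) (hQ1 : ∀ n, Q 1 n = γ)
    (hxX : ∀ t, 2 ≤ t → t ≤ T → x t ∈ 𝒳)
    (hxmin : ∀ t, 2 ≤ t → t ≤ T → ∀ y ∈ 𝒳,
      ⟪gradf (t - 1) (x (t - 1)), x t - x (t - 1)⟫
          + α (t - 1) * ‖x t - x (t - 1)‖ ^ 2
          + ∑ n, Q (t - 1) n * max (g (t - 1) n (x t)) 0 ≤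
        ⟪gradf (t - 1) (x (t - 1)), y - x (t - 1)⟫
          + α (t - 1) * ‖y - x (t - 1)‖ ^ 2
          + ∑ n, Q (t - 1) n * max (g (t - 1) n y) 0)
    (hQupd : ∀ t, 2 ≤ t → t ≤ T → ∀ n,
      Q t n = max ((1 - η) * Q (t - 1) n + max (g t n (x t)) 0) γ)
    (xstar : ℕ → EuclideanSpace ℝ (Fin p))
    (hxstarX : ∀ t, 1 ≤ t → t ≤ T → xstar t ∈ 𝒳)
    (hxstarfeas : ∀ t, 1 ≤ t → t ≤ T → ∀ n, g t n (xstar t) ≤ 0) :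
    ∑ t ∈ Finset.Icc 1 T, (f t (x t) - f t (xstar t)) ≤
      2 * R * ∑ t ∈ Finset.Icc 2 T, α (t - 1) * ‖xstar t - xstar (t - 1)‖
        + (D ^ 2 / 4) * ∑ t ∈ Finset.Icc 1 T, (1 / α t)
        + R ^ 2 * α T + D * R := by
  classical
  have hD0 : 0 ≤ D := le_trans (norm_nonneg _) (hgradD 1 (x 1) hx1)
  have hR0 : 0 ≤ R := hR.le
  have hxmem : ∀ t, 1 ≤ t → t ≤ T → x t ∈ 𝒳 := by
    intro t h1 h2
    rcases eq_or_lt_of_le h1 with h | h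
    · rw [← h]; exact hx1
    · exact hxX t h h2
  have hQnn : ∀ t, 1 ≤ t → t ≤ T → ∀ n, 0 ≤ Q t n := by
    intro t h1 h2 n
    rcases eq_or_lt_of_le h1 with h | h
    · rw [← h, hQ1]; exact hγ0.le
    · rw [hQupd t h h2 n]; exact le_trans hγ0.le (le_max_right _ _)
  set b : ℕ → ℝ := fun t => ‖xstar t - x t‖ ^ 2 with hb
  have hbt : ∀ s, b s = ‖xstar s - x s‖ ^ 2 := fun s => rfl
  have hb0 : ∀ t, 0 ≤ b t := fun t => by rw [hbt]; positivity
  have hbR : ∀ t, 1 ≤ t → t ≤ T → b t ≤ R ^ 2 := by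
    intro t h1 h2
    have hle := hXbdd (xstar t) (hxstarX t h1 h2) (x t) (hxmem t h1 h2)
    have h0 := norm_nonneg (xstar t - x t)
    rw [hbt]
    nlinarith
  -- per-step bound
  have step : ∀ t, 2 ≤ t → t ≤ T →
      f (t-1) (x (t-1)) - f (t-1) (xstar (t-1)) ≤
        D ^ 2 / (4 * α (t-1)) + α (t-1) * (b (t-1) - ‖xstar (t-1) - x t‖ ^ 2) := by
    intro t h2 hT'
    have hs1 : 1 ≤ t - 1 := by omega
    have hsT : t - 1 ≤ T := by omega
    have hxs : x (t-1) ∈ 𝒳 := hxmem (t-1) hs1 hsT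
    have hxst : xstar (t-1) ∈ 𝒳 := hxstarX (t-1) hs1 hsT
    have hxt : x t ∈ 𝒳 := hxX t h2 hT'
    have tp := three_point hXconv (gradf (t-1) (x (t-1))) (x (t-1)) (hαpos (t-1))
      (Q (t-1)) (hQnn (t-1) hs1 hsT) (g (t-1)) (hgconv (t-1)) hxt (hxmin t h2 hT') hxst
    have hS0 : (0:ℝ) ≤ ∑ n, Q (t-1) n * max (g (t-1) n (x t)) 0 :=
      Finset.sum_nonneg fun n _ => mul_nonneg (hQnn (t-1) hs1 hsT n) (le_max_right _ _)
    have hSstar : ∑ n, Q (t-1) n * max (g (t-1) n (xstar (t-1))) 0 = 0 :=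
      Finset.sum_eq_zero fun n _ => by
        rw [max_eq_right (hxstarfeas (t-1) hs1 hsT n)]; ring
    have hsub' := hsub (t-1) (x (t-1)) hxs (xstar (t-1)) hxst
    have hDb : - ⟪gradf (t-1) (x (t-1)), x t - x (t-1)⟫ ≤ D * ‖x t - x (t-1)‖ := by
      have h1 := abs_real_inner_le_norm (gradf (t-1) (x (t-1))) (x t - x (t-1))
      have h2' := hgradD (t-1) (x (t-1)) hxs
      have h3 := norm_nonneg (x t - x (t-1))
      have h4 := neg_abs_le ⟪gradf (t-1) (x (t-1)), x t - x (t-1)⟫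
      nlinarith
    have hquad : D * ‖x t - x (t-1)‖ - α (t-1) * ‖x t - x (t-1)‖ ^ 2
        ≤ D ^ 2 / (4 * α (t-1)) := by
      have hα := hαpos (t-1)
      have hq : 4 * α (t-1) * (D ^ 2 / (4 * α (t-1))) = D ^ 2 := by field_simp
      nlinarith [sq_nonneg (2 * α (t-1) * ‖x t - x (t-1)‖ - D)]
    rw [hbt]
    rw [hSstar] at tp
    linarith [tp, hS0, hsub', hDb, hquad]
  have hsumstep : ∑ t ∈ Finset.Icc 2 T, (f (t-1) (x (t-1)) - f (t-1) (xstar (t-1))) ≤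
      ∑ t ∈ Finset.Icc 2 T,
        (D ^ 2 / (4 * α (t-1)) + α (t-1) * (b (t-1) - ‖xstar (t-1) - x t‖ ^ 2)) :=
    Finset.sum_le_sum fun t ht => step t (Finset.mem_Icc.mp ht).1 (Finset.mem_Icc.mp ht).2
  -- termwise bound for the quadratic part
  have hterm : ∀ t, 2 ≤ t → t ≤ T →
      α (t-1) * (b (t-1) - ‖xstar (t-1) - x t‖ ^ 2) ≤
        α (t-1) * (b (t-1) - b t) + 2 * R * (α (t-1) * ‖xstar t - xstar (t-1)‖) := by
    intro t h2 hT'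
    have hxt : x t ∈ 𝒳 := hxX t h2 hT'
    have e1 : ‖xstar t - x t‖ ≤ ‖xstar t - xstar (t-1)‖ + ‖xstar (t-1) - x t‖ := by
      calc ‖xstar t - x t‖ = ‖(xstar t - xstar (t-1)) + (xstar (t-1) - x t)‖ := by
            congr 1; abel
        _ ≤ _ := norm_add_le _ _
    have e2 : ‖xstar t - x t‖ ≤ R := hXbdd _ (hxstarX t (by omega) hT') _ hxt
    have e3 : ‖xstar (t-1) - x t‖ ≤ R := hXbdd _ (hxstarX (t-1) (by omega) (by omega)) _ hxt
    have e4 : (0:ℝ) ≤ ‖xstar t - x t‖ := norm_nonneg _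
    have e5 : (0:ℝ) ≤ ‖xstar (t-1) - x t‖ := norm_nonneg _
    have e6 : (0:ℝ) ≤ ‖xstar t - xstar (t-1)‖ := norm_nonneg _
    have e7 : b t - ‖xstar (t-1) - x t‖ ^ 2 ≤ 2 * R * ‖xstar t - xstar (t-1)‖ := by
      rw [hbt]
      nlinarith [mul_nonneg (by linarith : (0:ℝ) ≤ ‖xstar (t-1) - x t‖ + ‖xstar t - xstar (t-1)‖ - ‖xstar t - x t‖)
          (by linarith : (0:ℝ) ≤ ‖xstar t - x t‖ + ‖xstar (t-1) - x t‖),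
        mul_nonneg (by linarith : (0:ℝ) ≤ 2 * R - ‖xstar t - x t‖ - ‖xstar (t-1) - x t‖) e6]
    have hα0 := (hαpos (t-1)).le
    nlinarith [mul_le_mul_of_nonneg_left e7 hα0]
  have habel : ∀ S, 1 ≤ S → S ≤ T →
      ∑ t ∈ Finset.Icc 2 S, α (t-1) * (b (t-1) - b t) ≤ α (S-1) * (R ^ 2 - b S) := by
    intro S hS1
    induction S, hS1 using Nat.le_induction with
    | base =>
      intro h1T
      rw [Finset.Icc_eq_empty (by omega), Finset.sum_empty]
      have h1 := hbR 1 le_rfl h1T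
      have h2 := (hαpos 0).le
      have : (1:ℕ) - 1 = 0 := rfl
      rw [this]
      nlinarith
    | succ S hS ih =>
      intro hST
      have hsplit := Finset.sum_Icc_succ_top (a := 2) (b := S) (by omega)
        (fun t => α (t-1) * (b (t-1) - b t))
      have ih' := ih (by omega)
      have hmono : α (S-1) ≤ α S := hαmono (by omega)
      have hRb : b S ≤ R ^ 2 := hbR S hS (by omega)
      have h1 : α (S-1) * (R^2 - b S) ≤ α S * (R^2 - b S) :=
        mul_le_mul_of_nonneg_right hmono (by linarith)
      simp only [Nat.add_sub_cancel] at hsplit ⊢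
      rw [hsplit]
      linarith [ih', h1]
  -- shift lemma
  have hshift : ∀ h : ℕ → ℝ, ∑ t ∈ Finset.Icc 2 T, h (t-1) = ∑ t ∈ Finset.Icc 1 (T-1), h t := by
    intro h
    have himg : Finset.Icc 2 T = Finset.image (· + 1) (Finset.Icc 1 (T-1)) := by
      ext t
      simp only [Finset.mem_Icc, Finset.mem_image]
      constructor
      · rintro ⟨ht2, htT⟩; exact ⟨t - 1, ⟨by omega, by omega⟩, by omega⟩
      · rintro ⟨s, ⟨hs1, hsT⟩, rfl⟩; omega
    rw [himg, Finset.sum_image (by intro u _ v _ huv; simp only at huv; omega)]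
    exact Finset.sum_congr rfl fun s _ => by congr 1
  have hT1 : T - 1 + 1 = T := by omega
  have hsplitT : ∑ t ∈ Finset.Icc 1 T, (f t (x t) - f t (xstar t))
      = ∑ t ∈ Finset.Icc 1 (T-1), (f t (x t) - f t (xstar t)) + (f T (x T) - f T (xstar T)) := by
    have h := Finset.sum_Icc_succ_top (a := 1) (b := T - 1) (by omega)
      (fun t => f t (x t) - f t (xstar t))
    rw [hT1] at h
    exact h
  have hlast : f T (x T) - f T (xstar T) ≤ D * R := by
    have hxT : x T ∈ 𝒳 := hxmem T hT le_rfl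
    have hxsT : xstar T ∈ 𝒳 := hxstarX T hT le_rfl
    have h1 := hsub T (x T) hxT (xstar T) hxsT
    have h2 := abs_real_inner_le_norm (gradf T (x T)) (xstar T - x T)
    have h3 := hgradD T (x T) hxT
    have h4 := hXbdd (xstar T) hxsT (x T) hxT
    have h5 := norm_nonneg (xstar T - x T)
    have h6 := norm_nonneg (gradf T (x T))
    have h7 := neg_abs_le ⟪gradf T (x T), xstar T - x T⟫
    nlinarith [mul_le_mul h3 h4 h5 hD0]
  have hP1 : ∑ t ∈ Finset.Icc 2 T, D ^ 2 / (4 * α (t-1))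
      ≤ (D ^ 2 / 4) * ∑ t ∈ Finset.Icc 1 T, (1 / α t) := by
    have hsh : ∑ t ∈ Finset.Icc 2 T, D ^ 2 / (4 * α (t-1))
        = ∑ t ∈ Finset.Icc 1 (T-1), D ^ 2 / (4 * α t) := hshift fun s => D ^ 2 / (4 * α s)
    rw [hsh]
    have hsub' : Finset.Icc 1 (T-1) ⊆ Finset.Icc 1 T := Finset.Icc_subset_Icc_right (by omega)
    calc ∑ t ∈ Finset.Icc 1 (T-1), D ^ 2 / (4 * α t)
        ≤ ∑ t ∈ Finset.Icc 1 T, D ^ 2 / (4 * α t) :=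
          Finset.sum_le_sum_of_subset_of_nonneg hsub' (fun i _ _ => by
            have := hαpos i; positivity)
      _ = (D ^ 2 / 4) * ∑ t ∈ Finset.Icc 1 T, (1 / α t) := by
          rw [Finset.mul_sum]
          exact Finset.sum_congr rfl fun i _ => by ring
  have hP2 : ∑ t ∈ Finset.Icc 2 T, α (t-1) * (b (t-1) - ‖xstar (t-1) - x t‖ ^ 2)
      ≤ 2 * R * (∑ t ∈ Finset.Icc 2 T, α (t-1) * ‖xstar t - xstar (t-1)‖) + R ^ 2 * α T := by
    have h1 : ∑ t ∈ Finset.Icc 2 T, α (t-1) * (b (t-1) - ‖xstar (t-1) - x t‖ ^ 2)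
        ≤ ∑ t ∈ Finset.Icc 2 T,
            (α (t-1) * (b (t-1) - b t) + 2 * R * (α (t-1) * ‖xstar t - xstar (t-1)‖)) :=
      Finset.sum_le_sum fun t ht => hterm t (Finset.mem_Icc.mp ht).1 (Finset.mem_Icc.mp ht).2
    rw [Finset.sum_add_distrib] at h1
    have h2 := habel T hT le_rfl
    have h3 : α (T-1) * (R ^ 2 - b T) ≤ R ^ 2 * α T := by
      have h4 : α (T-1) ≤ α T := hαmono (by omega)
      have h5 := hb0 T
      have h6 := (hαpos (T-1)).le
      nlinarith [mul_nonneg h6 h5, mul_nonneg (sub_nonneg.mpr h4) (sq_nonneg R)]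
    have h7 : ∑ t ∈ Finset.Icc 2 T, 2 * R * (α (t-1) * ‖xstar t - xstar (t-1)‖)
        = 2 * R * ∑ t ∈ Finset.Icc 2 T, α (t-1) * ‖xstar t - xstar (t-1)‖ := by
      rw [Finset.mul_sum]
    linarith
  have hA : ∑ t ∈ Finset.Icc 1 (T - 1), (f t (x t) - f t (xstar t))
      = ∑ t ∈ Finset.Icc 2 T, (f (t-1) (x (t-1)) - f (t-1) (xstar (t-1))) :=
    (hshift fun s => f s (x s) - f s (xstar s)).symm
  rw [hsplitT, hA]
  rw [Finset.sum_add_distrib] at hsumstep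
  linarith [hsumstep, hP1, hP2, hlast]
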